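/- For n ≥ 3, let J be a φ_n-injective quiver. If J contains distinct vertices u ≠ w, an edge g from u to w, and a loop f at w, then J contains an edge from w to u and a loop at u. -/

import Mathlib

/-- A quiver: vertex set, edge set, source and target maps. -/
structure Quiv where
  V : Type
  E : Type
  s : E → V
  t : E → V

/-- A quiver homomorphism. -/
@[ext]
structure QuivHom (G H : Quiv) where
  onV : G.V → H.V
  onE : G.E → H.E
  comm_s : ∀ e, H.s (onE e) = onV (G.s e)
  comm_t : ∀ e, H.t (onE e) = onV (G.t e)

/-- Identity quiver homomorphism. -/
def QuivHom.id (G : Quiv) : QuivHom G G :=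
  ⟨_root_.id, _root_.id, fun _ => rfl, fun _ => rfl⟩

/-- Composition of quiver homomorphisms. -/
def QuivHom.comp {G H K : Quiv} (g : QuivHom H K) (f : QuivHom G H) : QuivHom G K :=
  ⟨g.onV ∘ f.onV, g.onE ∘ f.onE,
    fun e => by simp [Function.comp, g.comm_s, f.comm_s],
    fun e => by simp [Function.comp, g.comm_t, f.comm_t]⟩

/-- The directed path `P_n` with vertices `a_0, …, a_{n-1}` and edges `a_i → a_{i+1}`. -/
def Quiv.path (n : ℕ) : Quiv :=
  ⟨Fin n, Fin (n - 1), fun i => ⟨i.val, by have := i.isLt; omega⟩,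
    fun i => ⟨i.val + 1, by have := i.isLt; omega⟩⟩

/-- The directed cycle `C_n`. -/
def Quiv.cyc (n : ℕ) : Quiv :=
  ⟨Fin n, Fin n, _root_.id, fun i => ⟨(i.val + 1) % n, Nat.mod_lt _ i.pos⟩⟩

/-- The natural embedding `φ_n : P_n → C_n`. -/
def pathEmb (n : ℕ) : QuivHom (Quiv.path n) (Quiv.cyc n) where
  onV := _root_.id
  onE := fun i => ⟨i.val, by have := i.isLt; omega⟩
  comm_s := fun e => rfl
  comm_t := fun e => by
    have he := e.isLt
    apply Fin.ext
    show (e.val + 1) % n = e.val + 1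
    exact Nat.mod_eq_of_lt (by omega)

/-- `J` is `φ_n`-injective: every quiver map `P_n → J` factors through `φ_n`. -/
def PhiInj (n : ℕ) (J : Quiv) : Prop :=
  ∀ ψ : QuivHom (Quiv.path n) J, ∃ ψ' : QuivHom (Quiv.cyc n) J,
    ψ'.comp (pathEmb n) = ψ

/-- `v, e` form a walk of length `k` in `J` (only indices `< k` matter). -/
def HasWalk (J : Quiv) (k : ℕ) (v : ℕ → J.V) (e : ℕ → J.E) : Prop :=
  ∀ i < k, J.s (e i) = v i ∧ J.t (e i) = v (i + 1)

/-- There is an edge from `a` to `b` in `J`. -/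
def Quiv.Edge (J : Quiv) (a b : J.V) : Prop := ∃ f, J.s f = a ∧ J.t f = b

/-- A loaded quiver: an edge between every (ordered) pair of vertices. -/
def Quiv.Loaded (J : Quiv) : Prop := ∀ a b, J.Edge a b

/-- `H`, with partitions `A` of its vertices and `B` of its edges indexed by the
vertices and edges of `G`, is a blow-up of `G`. -/
def IsBlowup (G H : Quiv) (A : G.V → Set H.V) (B : G.E → Set H.E) : Prop :=
  (∀ w, ∃! v, w ∈ A v) ∧ (∀ f, ∃! e, f ∈ B e) ∧
  (∀ e f, f ∈ B e → H.s f ∈ A (G.s e) ∧ H.t f ∈ A (G.t e)) ∧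
  (∀ e x y, x ∈ A (G.s e) → y ∈ A (G.t e) → ∃ f ∈ B e, H.s f = x ∧ H.t f = y)

/-- Monomorphisms of quivers: injective vertex and edge maps. -/
def QuivHom.Mono {G H : Quiv} (f : QuivHom G H) : Prop :=
  Function.Injective f.onV ∧ Function.Injective f.onE

/-- A class of quiver morphisms. -/
def MorClass := ∀ D C : Quiv, Set (QuivHom D C)

/-- `J` is injective with respect to a class of morphisms `Φ`. -/
def ClassInjective (Φ : MorClass) (J : Quiv) : Prop :=
  ∀ D C (φ : QuivHom D C), φ ∈ Φ D C → ∀ ψ : QuivHom D J,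
    ∃ ψ' : QuivHom C J, ψ'.comp φ = ψ

/-- Undirected adjacency. -/
def Quiv.Adj (J : Quiv) (a b : J.V) : Prop := J.Edge a b ∨ J.Edge b a

/-- Weak connectivity. -/
def Quiv.WeaklyConnected (J : Quiv) : Prop :=
  ∀ a b : J.V, Relation.ReflTransGen J.Adj a b

/-- `J` has a closed walk of length `m`. -/
def ClosedWalk (J : Quiv) (m : ℕ) : Prop :=
  ∃ v e, HasWalk J m v e ∧ v m = v 0

/-- Cyclic successor on `Fin ℓ`. -/
def finNext {ℓ : ℕ} (i : Fin ℓ) : Fin ℓ := ⟨(i.val + 1) % ℓ, Nat.mod_lt _ i.pos⟩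

/-- Disjoint union (coproduct) of a family of quivers. -/
def Quiv.sigma {Λ : Type} (Jf : Λ → Quiv) : Quiv :=
  ⟨Σ l, (Jf l).V, Σ l, (Jf l).E,
    fun f => ⟨f.1, (Jf f.1).s f.2⟩, fun f => ⟨f.1, (Jf f.1).t f.2⟩⟩

lemma phiInj_key (n : ℕ) (hn : 3 ≤ n) (J : Quiv) (hJ : PhiInj n J)
    (v : Fin n → J.V) (e : Fin (n - 1) → J.E)
    (hs : ∀ i : Fin (n - 1), J.s (e i) = v ⟨i.val, by have := i.isLt; omega⟩)
    (ht : ∀ i : Fin (n - 1), J.t (e i) = v ⟨i.val + 1, by have := i.isLt; omega⟩) :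
    J.Edge (v ⟨n - 1, by omega⟩) (v ⟨0, by omega⟩) := by
  let ψ : QuivHom (Quiv.path n) J := ⟨v, e, hs, ht⟩
  obtain ⟨ψ', hψ'⟩ := hJ ψ
  have hV : ψ'.onV = v := by
    have := congrArg QuivHom.onV hψ'
    exact this
  refine ⟨ψ'.onE ⟨n - 1, by omega⟩, ?_, ?_⟩
  · refine (ψ'.comm_s _).trans ?_; rw [hV]
    rfl
  · refine (ψ'.comm_t _).trans ?_; rw [hV]
    congr 1
    show (⟨(n - 1 + 1) % n, _⟩ : Fin n) = ⟨0, by omega⟩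
    apply Fin.ext
    show (n - 1 + 1) % n = 0
    have : n - 1 + 1 = n := by omega
    simp [this]

/-- propagating loops. -/
theorem propagating_loops (n : ℕ) (hn : 3 ≤ n) (J : Quiv) (hJ : PhiInj n J)
    (u w : J.V) (huw : u ≠ w) (hg : J.Edge u w) (hf : J.Edge w w) :
    J.Edge w u ∧ J.Edge u u := by
  obtain ⟨g, hgs, hgt⟩ := hg
  obtain ⟨f, hfs, hft⟩ := hf
  have hwu : J.Edge w u := by
    have := phiInj_key n hn J hJ
      (fun i => if i.val = 0 then u else w)
      (fun i => if i.val = 0 then g else f) ?_ ?_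
    · simp only [if_neg (show ¬ (n - 1 = 0) by omega), if_pos rfl] at this
      exact this
    · intro i
      by_cases h : i.val = 0 <;> simp [h, hgs, hfs]
    · intro i
      by_cases h : i.val = 0 <;> simp [h, hgt, hft]
  obtain ⟨h, hhs, hht⟩ := hwu
  have huu : J.Edge u u := by
    have := phiInj_key n hn J hJ
      (fun i => if i.val = 0 ∨ i.val = n - 1 then u else w)
      (fun i => if i.val = 0 then g else if i.val = n - 2 then h else f) ?_ ?_
    · simpa using this
    · intro i
      have hi := i.isLt
      dsimp only
      by_cases h0 : i.val = 0
      · rw [if_pos h0, if_pos (Or.inl h0), hgs]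
      · have hne : ¬ (i.val = 0 ∨ i.val = n - 1) := by omega
        by_cases h2 : i.val = n - 2
        · rw [if_neg h0, if_pos h2, if_neg hne, hhs]
        · rw [if_neg h0, if_neg h2, if_neg hne, hfs]
    · intro i
      have hi := i.isLt
      dsimp only
      by_cases h0 : i.val = 0
      · have hne : ¬ (i.val + 1 = 0 ∨ i.val + 1 = n - 1) := by omega
        rw [if_pos h0, if_neg hne, hgt]
      · by_cases h2 : i.val = n - 2
        · have hor : i.val + 1 = 0 ∨ i.val + 1 = n - 1 := by omega
          rw [if_neg h0, if_pos h2, if_pos hor, hht]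
        · have hne : ¬ (i.val + 1 = 0 ∨ i.val + 1 = n - 1) := by omega
          rw [if_neg h0, if_neg h2, if_neg hne, hft]
  exact ⟨⟨h, hhs, hht⟩, huu⟩
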